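/- Under a product probability, the cluster component of an elementary product is given by C_I(∏_k f_k) = (∏_{j∉I} E f_j) · ∏_{i∈I} (f_i − E f_i), where each f_k depends only on site k and E f_k is its expectation. -/

import Mathlib

/-- `Depends f I` : the configuration function `f` depends only on the sites in `I`. -/
def Depends {S : Type*} {Sps : S → Type*} (f : (∀ i, Sps i) → ℂ) (I : Finset S) : Prop :=
  ∀ x y : ∀ i, Sps i, (∀ i ∈ I, x i = y i) → f x = f y

lemma fubini' {S : Type*} [Fintype S] [DecidableEq S] {Sps : S → Type*} [∀ i, Fintype (Sps i)]
    (p : ∀ i, Sps i → ℝ) (hsum : ∀ i, ∑ s, p i s = 1)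
    (I : Finset S) (g : (∀ i, Sps i) → ℂ) (hg : Depends g I) (h : ∀ j, Sps j → ℂ) :
    ∑ x, (∏ i, (p i (x i) : ℂ)) * g x * ∏ j ∈ Iᶜ, h j (x j)
      = (∏ j ∈ Iᶜ, ∑ s, (p j s : ℂ) * h j s) * ∑ x, (∏ i, (p i (x i) : ℂ)) * g x := by
  have hne : ∀ i, Nonempty (Sps i) := by
    intro i
    by_contra hc
    rw [not_nonempty_iff] at hc
    have := hsum i
    rw [Finset.univ_eq_empty, Finset.sum_empty] at this
    norm_num at this
  set e := Equiv.piEquivPiSubtypeProd (· ∈ I) Sps with he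
  have b₀ : ∀ j : { x // x ∉ I }, Sps j := fun j => Classical.arbitrary _
  have hcI : ∀ (a : ∀ i : { x // x ∈ I }, Sps i) (b : ∀ j : { x // x ∉ I }, Sps j)
      (i : S) (hi : i ∈ I), e.symm (a, b) i = a ⟨i, hi⟩ := by
    intro a b i hi
    simp [he, Equiv.piEquivPiSubtypeProd, hi]
  have hcO : ∀ (a : ∀ i : { x // x ∈ I }, Sps i) (b : ∀ j : { x // x ∉ I }, Sps j)
      (i : S) (hi : i ∉ I), e.symm (a, b) i = b ⟨i, hi⟩ := by
    intro a b i hi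
    simp [he, Equiv.piEquivPiSubtypeProd, hi]
  have key : ∀ h : ∀ j, Sps j → ℂ,
      ∑ x, (∏ i, (p i (x i) : ℂ)) * g x * ∏ j ∈ Iᶜ, h j (x j)
        = (∑ a : ∀ i : { x // x ∈ I }, Sps i,
            (∏ i : { x // x ∈ I }, (p i (a i) : ℂ)) * g (e.symm (a, b₀)))
          * ∏ j : { x // x ∉ I }, ∑ s, (p (j : S) s : ℂ) * h (j : S) s := by
    intro h
    rw [← Equiv.sum_comp e.symm, Fintype.sum_prod_type]
    have step : ∀ (a : ∀ i : { x // x ∈ I }, Sps i) (b : ∀ j : { x // x ∉ I }, Sps j),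
        (∏ i, (p i (e.symm (a, b) i) : ℂ)) * g (e.symm (a, b)) * ∏ j ∈ Iᶜ, h j (e.symm (a, b) j)
          = ((∏ i : { x // x ∈ I }, (p i (a i) : ℂ)) * g (e.symm (a, b₀)))
            * ∏ j : { x // x ∉ I }, ((p (j : S) (b j) : ℂ) * h (j : S) (b j)) := by
      intro a b
      have h1 : (∏ i, (p i (e.symm (a, b) i) : ℂ))
          = (∏ i : { x // x ∈ I }, (p i (a i) : ℂ)) * ∏ j : { x // x ∉ I }, (p (j : S) (b j) : ℂ) := by
        rw [← Fintype.prod_subtype_mul_prod_subtype (· ∈ I) (fun i => (p i (e.symm (a, b) i) : ℂ))]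
        congr 1
        · refine Finset.prod_congr (congrArg (@Finset.univ _) (Subsingleton.elim _ _))
            fun i _ => by rw [hcI a b i.1 i.2]
        · refine Finset.prod_congr (congrArg (@Finset.univ _) (Subsingleton.elim _ _))
            fun i _ => by rw [hcO a b i.1 i.2]
      have h2 : g (e.symm (a, b)) = g (e.symm (a, b₀)) := by
        apply hg
        intro i hi
        rw [hcI a b i hi, hcI a b₀ i hi]
      have h3 : (∏ j ∈ Iᶜ, h j (e.symm (a, b) j)) = ∏ j : { x // x ∉ I }, h (j : S) (b j) := by
        rw [Finset.prod_subtype Iᶜ (fun x => Finset.mem_compl) (fun j => h j (e.symm (a, b) j))]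
        exact Finset.prod_congr rfl fun i _ => by rw [hcO a b i.1 i.2]
      rw [h1, h2, h3, Finset.prod_mul_distrib]
      ring
    calc (∑ a : ∀ i : { x // x ∈ I }, Sps i, ∑ b : ∀ j : { x // x ∉ I }, Sps j,
            (∏ i, (p i (e.symm (a, b) i) : ℂ)) * g (e.symm (a, b)) * ∏ j ∈ Iᶜ, h j (e.symm (a, b) j))
        = ∑ a : ∀ i : { x // x ∈ I }, Sps i, ∑ b : ∀ j : { x // x ∉ I }, Sps j,
            ((∏ i : { x // x ∈ I }, (p i (a i) : ℂ)) * g (e.symm (a, b₀)))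
            * ∏ j : { x // x ∉ I }, ((p (j : S) (b j) : ℂ) * h (j : S) (b j)) :=
          Finset.sum_congr rfl fun a _ => Finset.sum_congr rfl fun b _ => step a b
      _ = (∑ a : ∀ i : { x // x ∈ I }, Sps i,
            (∏ i : { x // x ∈ I }, (p i (a i) : ℂ)) * g (e.symm (a, b₀)))
          * ∑ b : ∀ j : { x // x ∉ I }, Sps j,
            ∏ j : { x // x ∉ I }, ((p (j : S) (b j) : ℂ) * h (j : S) (b j)) := by
          rw [Finset.sum_mul]
          exact Finset.sum_congr rfl fun a _ => by rw [Finset.mul_sum]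
      _ = _ := by
          congr 1
          exact (Fintype.prod_sum fun (j : { x // x ∉ I }) (s : Sps (j : S)) =>
            (p (j : S) s : ℂ) * h (j : S) s).symm
  have h1 := key h
  have h2 := key (fun _ _ => (1 : ℂ))
  simp only [mul_one, Finset.prod_const_one] at h2
  have hone : ∀ j : S, (∑ s, (p j s : ℂ)) = 1 := by
    intro j
    rw [← Complex.ofReal_sum, hsum j, Complex.ofReal_one]
  have h2' : ∑ x, (∏ i, (p i (x i) : ℂ)) * g x
      = ∑ a : ∀ i : { x // x ∈ I }, Sps i,
          (∏ i : { x // x ∈ I }, (p i (a i) : ℂ)) * g (e.symm (a, b₀)) := by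
    rw [h2]
    simp [hone]
  rw [h1, h2']
  rw [Finset.prod_subtype Iᶜ (fun x => Finset.mem_compl) (fun j => ∑ s, (p j s : ℂ) * h j s)]
  ring

lemma Eformula {S : Type*} [Fintype S] [DecidableEq S]
    {Sps : S → Type*} [∀ i, Fintype (Sps i)]
    (p : ∀ i, Sps i → ℝ) (hp : ∀ i s, 0 < p i s) (hsum : ∀ i, ∑ s, p i s = 1)
    (E : Finset S → (((∀ i, Sps i) → ℂ) →ₗ[ℂ] ((∀ i, Sps i) → ℂ)))
    (hrange : ∀ I f, Depends (E I f) I)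
    (hfix : ∀ I f, Depends f I → E I f = f)
    (hadj : ∀ (I : Finset S) (f g : (∀ i, Sps i) → ℂ),
      ∑ x, (∏ i, (p i (x i) : ℂ)) * (starRingEnd ℂ) ((E I f) x) * g x
        = ∑ x, (∏ i, (p i (x i) : ℂ)) * (starRingEnd ℂ) (f x) * (E I g) x)
    (f : ∀ i, Sps i → ℂ) (I : Finset S) :
    E I (fun x => ∏ k, f k (x k)) =
      fun x => (∏ j ∈ Iᶜ, ∑ s, (p j s : ℂ) * f j s) * ∏ i ∈ I, f i (x i) := by
  set F : (∀ i, Sps i) → ℂ := fun x => ∏ k, f k (x k) with hF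
  set G : (∀ i, Sps i) → ℂ :=
    fun x => (∏ j ∈ Iᶜ, ∑ s, (p j s : ℂ) * f j s) * ∏ i ∈ I, f i (x i) with hG
  have hGdep : Depends G I := by
    intro x y hxy
    simp only [hG]
    congr 1
    exact Finset.prod_congr rfl fun i hi => by rw [hxy i hi]
  set H : (∀ i, Sps i) → ℂ := fun x => E I F x - G x with hH
  have hHdep : Depends H I := by
    intro x y hxy
    simp only [hH]
    rw [hrange I F x y hxy, hGdep x y hxy]
  have orth : ∀ g : (∀ i, Sps i) → ℂ, Depends g I →
      ∑ x, (∏ i, (p i (x i) : ℂ)) * (starRingEnd ℂ) (g x) * H x = 0 := by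
    intro g hgdep
    have hgdep' : Depends (fun x => (starRingEnd ℂ) (g x) * ∏ i ∈ I, f i (x i)) I := by
      intro x y hxy
      simp only
      rw [hgdep x y hxy]
      congr 1
      exact Finset.prod_congr rfl fun i hi => by rw [hxy i hi]
    have hA : ∑ x, (∏ i, (p i (x i) : ℂ)) * (starRingEnd ℂ) (g x) * E I F x
        = ∑ x, (∏ i, (p i (x i) : ℂ)) * (starRingEnd ℂ) (g x) * F x := by
      rw [← hadj I g F, hfix I g hgdep]
    have hB : ∑ x, (∏ i, (p i (x i) : ℂ)) * (starRingEnd ℂ) (g x) * F x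
        = (∏ j ∈ Iᶜ, ∑ s, (p j s : ℂ) * f j s)
          * ∑ x, (∏ i, (p i (x i) : ℂ)) * ((starRingEnd ℂ) (g x) * ∏ i ∈ I, f i (x i)) := by
      rw [← fubini' p hsum I _ hgdep' f]
      apply Finset.sum_congr rfl
      intro x _
      have : F x = (∏ i ∈ I, f i (x i)) * ∏ j ∈ Iᶜ, f j (x j) :=
        (Finset.prod_mul_prod_compl I _).symm
      rw [this]
      ring
    have hC : ∑ x, (∏ i, (p i (x i) : ℂ)) * (starRingEnd ℂ) (g x) * G x
        = (∏ j ∈ Iᶜ, ∑ s, (p j s : ℂ) * f j s)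
          * ∑ x, (∏ i, (p i (x i) : ℂ)) * ((starRingEnd ℂ) (g x) * ∏ i ∈ I, f i (x i)) := by
      rw [Finset.mul_sum]
      apply Finset.sum_congr rfl
      intro x _
      simp only [hG]
      ring
    have expand : ∀ x, (∏ i, (p i (x i) : ℂ)) * (starRingEnd ℂ) (g x) * H x
        = (∏ i, (p i (x i) : ℂ)) * (starRingEnd ℂ) (g x) * E I F x
          - (∏ i, (p i (x i) : ℂ)) * (starRingEnd ℂ) (g x) * G x := by
      intro x; simp only [hH]; ring
    rw [Finset.sum_congr rfl fun x _ => expand x, Finset.sum_sub_distrib, hA, hB, hC, sub_self]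
  have hzero := orth H hHdep
  have hreal : ∑ x, (∏ i, p i (x i)) * Complex.normSq (H x) = 0 := by
    have hcast : ((∑ x, (∏ i, p i (x i)) * Complex.normSq (H x) : ℝ) : ℂ) = 0 := by
      rw [← hzero]
      push_cast
      apply Finset.sum_congr rfl
      intro x _
      rw [Complex.normSq_eq_conj_mul_self]
      ring
    exact_mod_cast hcast
  have hHzero : ∀ x, H x = 0 := by
    intro x
    have hnn : ∀ y ∈ (Finset.univ : Finset (∀ i, Sps i)),
        0 ≤ (∏ i, p i (y i)) * Complex.normSq (H y) := fun y _ =>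
      mul_nonneg (Finset.prod_nonneg fun i _ => (hp i (y i)).le) (Complex.normSq_nonneg _)
    have := (Finset.sum_eq_zero_iff_of_nonneg hnn).mp hreal x (Finset.mem_univ x)
    have hwpos : 0 < ∏ i, p i (x i) := Finset.prod_pos fun i _ => hp i (x i)
    have : Complex.normSq (H x) = 0 := by
      rcases mul_eq_zero.mp this with h | h
      · exact absurd h hwpos.ne'
      · exact h
    exact Complex.normSq_eq_zero.mp this
  funext x
  have := hHzero x
  simp only [hH] at this
  linear_combination this

theorem cluster_component_of_elementary_product {S : Type*} [Fintype S] [DecidableEq S]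
    {Sps : S → Type*} [∀ i, Fintype (Sps i)]
    (p : ∀ i, Sps i → ℝ) (hp : ∀ i s, 0 < p i s) (hsum : ∀ i, ∑ s, p i s = 1)
    (E : Finset S → (((∀ i, Sps i) → ℂ) →ₗ[ℂ] ((∀ i, Sps i) → ℂ)))
    (hrange : ∀ I f, Depends (E I f) I)
    (hfix : ∀ I f, Depends f I → E I f = f)
    (hadj : ∀ (I : Finset S) (f g : (∀ i, Sps i) → ℂ),
      ∑ x, (∏ i, (p i (x i) : ℂ)) * (starRingEnd ℂ) ((E I f) x) * g x
        = ∑ x, (∏ i, (p i (x i) : ℂ)) * (starRingEnd ℂ) (f x) * (E I g) x)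
    (C : Finset S → (((∀ i, Sps i) → ℂ) →ₗ[ℂ] ((∀ i, Sps i) → ℂ)))
    (hEC : ∀ I : Finset S, E I = ∑ J ∈ I.powerset, C J)
    (f : ∀ i, Sps i → ℂ) (I : Finset S) :
    C I (fun x => ∏ k, f k (x k)) =
      fun x => (∏ j ∈ Iᶜ, ∑ s, (p j s : ℂ) * f j s) *
        ∏ i ∈ I, (f i (x i) - ∑ s, (p i s : ℂ) * f i s) := by
  induction I using Finset.strongInduction with
  | _ I IH =>
    set F : (∀ i, Sps i) → ℂ := fun x => ∏ k, f k (x k) with hF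
    set m : S → ℂ := fun j => ∑ s, (p j s : ℂ) * f j s with hm
    have h1 : E I F = ∑ J ∈ I.powerset, C J F := by
      rw [hEC I]; simp [LinearMap.sum_apply]
    have hsplit : ∀ J ∈ I.powerset, (∏ j ∈ Jᶜ, m j)
        = (∏ j ∈ Iᶜ, m j) * ∏ j ∈ I \ J, m j := by
      intro J hJ
      rw [Finset.mem_powerset] at hJ
      have hun : Jᶜ = Iᶜ ∪ (I \ J) := by
        ext a
        simp only [Finset.mem_compl, Finset.mem_union, Finset.mem_sdiff]
        constructor
        · intro ha
          by_cases h : a ∈ I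
          · exact Or.inr ⟨h, ha⟩
          · exact Or.inl h
        · rintro (h | ⟨_, h⟩)
          · exact fun hc => h (hJ hc)
          · exact h
      have hdisj : Disjoint (Iᶜ) (I \ J) := by
        rw [Finset.disjoint_left]
        intro a ha hb
        rw [Finset.mem_compl] at ha
        exact ha (Finset.mem_sdiff.mp hb).1
      rw [hun, Finset.prod_union hdisj]
    have key : ∀ x : ∀ i, Sps i,
        ∑ J ∈ I.powerset, (∏ j ∈ Jᶜ, m j) * ∏ i ∈ J, (f i (x i) - m i)
          = (∏ j ∈ Iᶜ, m j) * ∏ i ∈ I, f i (x i) := by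
      intro x
      calc ∑ J ∈ I.powerset, (∏ j ∈ Jᶜ, m j) * ∏ i ∈ J, (f i (x i) - m i)
          = ∑ J ∈ I.powerset, (∏ j ∈ Iᶜ, m j)
              * ((∏ i ∈ J, (f i (x i) - m i)) * ∏ j ∈ I \ J, m j) := by
            refine Finset.sum_congr rfl fun J hJ => ?_
            rw [hsplit J hJ]; ring
        _ = (∏ j ∈ Iᶜ, m j) * ∑ J ∈ I.powerset,
              (∏ i ∈ J, (f i (x i) - m i)) * ∏ j ∈ I \ J, m j := by
            rw [Finset.mul_sum]
        _ = (∏ j ∈ Iᶜ, m j) * ∏ i ∈ I, ((f i (x i) - m i) + m i) := by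
            rw [Finset.prod_add]
        _ = (∏ j ∈ Iᶜ, m j) * ∏ i ∈ I, f i (x i) := by
            congr 1
            exact Finset.prod_congr rfl fun i _ => by ring
    -- rewrite the sum over the powerset, splitting off I
    have h2 : C I F + ∑ J ∈ I.powerset.erase I, C J F = E I F := by
      rw [h1]
      exact Finset.add_sum_erase _ (fun J => C J F) (Finset.mem_powerset_self I)
    have h3 : ∑ J ∈ I.powerset.erase I, C J F
        = ∑ J ∈ I.powerset.erase I,
            (fun x => (∏ j ∈ Jᶜ, m j) * ∏ i ∈ J, (f i (x i) - m i)) := by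
      refine Finset.sum_congr rfl fun J hJ => ?_
      have hJ' := Finset.mem_erase.mp hJ
      exact IH J (Finset.ssubset_iff_subset_ne.mpr
        ⟨Finset.mem_powerset.mp hJ'.2, hJ'.1⟩)
    have h4 : C I F = E I F - ∑ J ∈ I.powerset.erase I,
        (fun x => (∏ j ∈ Jᶜ, m j) * ∏ i ∈ J, (f i (x i) - m i)) := by
      rw [← h3, ← h2]; abel
    rw [h4, Eformula p hp hsum E hrange hfix hadj f I]
    funext x
    simp only [Pi.sub_apply, Finset.sum_apply]
    have hps : ∑ J ∈ I.powerset, (∏ j ∈ Jᶜ, m j) * ∏ i ∈ J, (f i (x i) - m i)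
        = (∏ j ∈ Iᶜ, m j) * ∏ i ∈ I, (f i (x i) - m i)
          + ∑ J ∈ I.powerset.erase I, (∏ j ∈ Jᶜ, m j) * ∏ i ∈ J, (f i (x i) - m i) :=
      (Finset.add_sum_erase _ (fun J => (∏ j ∈ Jᶜ, m j) * ∏ i ∈ J, (f i (x i) - m i))
        (Finset.mem_powerset_self I)).symm
    have hkey := key x
    rw [hps] at hkey
    show (∏ j ∈ Iᶜ, m j) * ∏ i ∈ I, f i (x i)
        - ∑ J ∈ I.powerset.erase I, (∏ j ∈ Jᶜ, m j) * ∏ i ∈ J, (f i (x i) - m i)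
      = (∏ j ∈ Iᶜ, m j) * ∏ i ∈ I, (f i (x i) - m i)
    linear_combination -hkey
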